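/- Let 𝒞 be an abelian category and x, y, z objects of 𝒞 such that the sets Hom(x,z) and Hom(x,x) are finite. Then the set M := {f : x → z | f is a monomorphism and coker(f) ≅ y} is finite, the set S of subobjects x' of z such that the underlying object of x' is isomorphic to x and the quotient z/x' (the cokernel of the inclusion x' → z) is isomorphic to y is finite, and |M| = |Aut(x)| · |S|, where Aut(x) is the group of automorphisms of x. -/

import Mathlib

open CategoryTheory CategoryTheory.Limits

/-- In an abelian category, if `Hom(x, z)` and `Hom(x, x)` are finite, then the set `M` of
monomorphisms `x → z` with cokernel isomorphic to `y` is finite, the set `S` of subobjects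
`x'` of `z` with `x' ≅ x` and `z/x' ≅ y` is finite, and `|M| = |Aut(x)| · |S|`. -/
theorem statement7 {C : Type*} [Category C] [Abelian C] (x y z : C)
    [Finite (x ⟶ z)] [Finite (x ⟶ x)] :
    {f : x ⟶ z | Mono f ∧ Nonempty (cokernel f ≅ y)}.Finite ∧
    {x' : Subobject z |
      Nonempty ((x' : C) ≅ x) ∧ Nonempty (cokernel x'.arrow ≅ y)}.Finite ∧
    Nat.card {f : x ⟶ z | Mono f ∧ Nonempty (cokernel f ≅ y)} =
      Nat.card (Aut x) *
        Nat.card {x' : Subobject z |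
          Nonempty ((x' : C) ≅ x) ∧ Nonempty (cokernel x'.arrow ≅ y)} := by
  classical
  haveI hAutIso : ∀ a : Aut x, IsIso (Iso.hom (X := x) (Y := x) a) :=
    fun a => Iso.isIso_hom (X := x) (Y := x) a
  set M := {f : x ⟶ z | Mono f ∧ Nonempty (cokernel f ≅ y)} with hMdef
  set S := {x' : Subobject z |
      Nonempty ((x' : C) ≅ x) ∧ Nonempty (cokernel x'.arrow ≅ y)} with hSdef
  -- choose, for each element of S, an isomorphism with x
  have e : ∀ s : S, (((s : Subobject z) : C) ≅ x) := fun s => s.2.1.some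
  -- the map from Aut x × S to M
  have Fmem : ∀ (a : Aut x) (s : S),
      (a.hom ≫ (e s).inv ≫ (s : Subobject z).arrow) ∈ M := by
    intro a s
    constructor
    · exact mono_comp _ _
    · refine ⟨(cokernelEpiComp a.hom _).trans ((cokernelEpiComp (e s).inv _).trans
        s.2.2.some)⟩
  let F : Aut x × S → M := fun p => ⟨p.1.hom ≫ (e p.2).inv ≫ (p.2 : Subobject z).arrow,
    Fmem p.1 p.2⟩
  have hF : Function.Bijective F := by
    constructor
    · rintro ⟨a, s⟩ ⟨a', s'⟩ h
      have hval : a.hom ≫ (e s).inv ≫ (s : Subobject z).arrow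
          = a'.hom ≫ (e s').inv ≫ (s' : Subobject z).arrow := congrArg Subtype.val h
      have hmk : ∀ (b : Aut x) (t : S),
          Subobject.mk (b.hom ≫ (e t).inv ≫ (t : Subobject z).arrow) = (t : Subobject z) := by
        intro b t
        have : Subobject.mk (b.hom ≫ (e t).inv ≫ (t : Subobject z).arrow)
            = Subobject.mk (t : Subobject z).arrow := by
          refine Subobject.mk_eq_mk_of_comm _ _ ((b.trans (e t).symm)) ?_
          exact Category.assoc _ _ _
        simpa using this
      have hs : s = s' := by
        apply Subtype.ext
        have h2 : Subobject.mk (a.hom ≫ (e s).inv ≫ (s : Subobject z).arrow)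
            = Subobject.mk (a'.hom ≫ (e s').inv ≫ (s' : Subobject z).arrow) :=
          Subobject.mk_eq_mk_of_comm _ _ (Iso.refl x) (by simpa using hval.symm)
        rwa [hmk, hmk] at h2
      subst hs
      have : a.hom = a'.hom := by
        have := hval
        rw [cancel_mono] at this
        exact this
      exact Prod.ext (by ext; exact this) rfl
    · rintro ⟨f, hf1, hf2⟩
      haveI : Mono f := hf1
      have hsmem : Subobject.mk f ∈ S := by
        refine ⟨⟨Subobject.underlyingIso f⟩, ?_⟩
        refine ⟨(cokernelIsoOfEq (Subobject.underlyingIso_hom_comp_eq_mk f).symm).trans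
          ((cokernelEpiComp (Subobject.underlyingIso f).hom f).trans hf2.some)⟩
      set s : S := ⟨Subobject.mk f, hsmem⟩ with hs
      refine ⟨⟨(Subobject.underlyingIso f).symm.trans (e s), s⟩, ?_⟩
      apply Subtype.ext
      show ((Subobject.underlyingIso f).symm.trans (e s)).hom ≫ (e s).inv
          ≫ (s : Subobject z).arrow = f
      simp [hs]
      exact Subobject.underlyingIso_arrow f
  have hAut : Finite (Aut x) :=
    Finite.of_injective (fun a : Aut x => a.hom) fun a b hab => Iso.ext hab
  have hMfin : M.Finite := Set.toFinite _
  haveI : Finite M := hMfin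
  have hSfin : Finite S :=
    Finite.of_injective (fun s => F ⟨1, s⟩) fun s t hst => by
      have := hF.1 hst; exact (Prod.ext_iff.mp this).2
  refine ⟨hMfin, Set.finite_coe_iff.mp hSfin, ?_⟩
  rw [← Nat.card_eq_of_bijective F hF, Nat.card_prod]
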